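/- Let n be a positive integer and K ≥ 1 a real number. Let a^{jk} : ℝⁿ → ℝ (1 ≤ j,k ≤ n) be continuously differentiable with a^{jk} = a^{kj}, |a^{jk}(x)| ≤ K and |∂_{x_l} a^{jk}(x)| ≤ K for all x, j, k, l; let β : ℝⁿ → ℝ be twice continuously differentiable with 0 ≤ β(x) ≤ 1, |∂_{x_j}β(x)| ≤ K and |∂_{x_j}∂_{x_k}β(x)| ≤ K for all x, j, k. Fix real numbers m ≥ 1, λ ≥ 1, μ ≥ 1, γ > 0, and set ξ(x) = γ·e^{μ(6m+β(x))} and ℓ(x) = λγ·(e^{μ(6m+β(x))} − μe^{μ(6m+6)}). Then there exists a constant C depending only on n and K such that the function A(x) = Σ_{j,k=1}^n [a^{jk}(x)·∂_jℓ(x)·∂_kℓ(x) − ∂_k(a^{jk}·∂_jℓ)(x)] satisfies |A(x) − λ²μ²ξ(x)²Ψ(x)| ≤ C·λμ²ξ(x) for all x ∈ ℝⁿ, where Ψ(x) = Σ_{j,k=1}^n a^{jk}(x)·∂_jβ(x)·∂_kβ(x). -/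

import Mathlib

/-- The `j`-th partial derivative of a function on `ℝⁿ`. -/
noncomputable def pd {n : ℕ} (f : EuclideanSpace ℝ (Fin n) → ℝ) (j : Fin n)
    (x : EuclideanSpace ℝ (Fin n)) : ℝ :=
  fderiv ℝ f x (EuclideanSpace.single j 1)

/-- The Carleman weight exponent `ℓ(x) = λγ(e^{μ(6m+β(x))} - μe^{μ(6m+6)})` at frozen time. -/
noncomputable def ellFun {n : ℕ} (m lam mu γ : ℝ) (β : EuclideanSpace ℝ (Fin n) → ℝ)
    (x : EuclideanSpace ℝ (Fin n)) : ℝ :=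
  lam * γ * (Real.exp (mu * (6 * m + β x)) - mu * Real.exp (mu * (6 * m + 6)))

/-- The auxiliary function `A = Σ_{j,k} (a^{jk} ℓ_j ℓ_k - (a^{jk} ℓ_j)_k)`. -/
noncomputable def Afun {n : ℕ} (a : Fin n → Fin n → EuclideanSpace ℝ (Fin n) → ℝ)
    (ℓ : EuclideanSpace ℝ (Fin n) → ℝ) (x : EuclideanSpace ℝ (Fin n)) : ℝ :=
  ∑ j : Fin n, ∑ k : Fin n,
    (a j k x * pd ℓ j x * pd ℓ k x - pd (fun y => a j k y * pd ℓ j y) k x)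

section helpers
variable {n : ℕ}

lemma pd_mul {f g : EuclideanSpace ℝ (Fin n) → ℝ} {x} (hf : DifferentiableAt ℝ f x)
    (hg : DifferentiableAt ℝ g x) (k : Fin n) :
    pd (fun y => f y * g y) k x = f x * pd g k x + g x * pd f k x := by
  simp [pd, fderiv_fun_mul hf hg]

lemma pd_const_mul {f : EuclideanSpace ℝ (Fin n) → ℝ} {x} (c : ℝ)
    (hf : DifferentiableAt ℝ f x) (k : Fin n) :
    pd (fun y => c * f y) k x = c * pd f k x := by
  simp [pd, fderiv_const_mul hf c]

lemma pd_sub_const {f : EuclideanSpace ℝ (Fin n) → ℝ} {x} (c : ℝ) (k : Fin n) :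
    pd (fun y => f y - c) k x = pd f k x := by
  simp [pd, fderiv_sub_const]

lemma pd_const_add {f : EuclideanSpace ℝ (Fin n) → ℝ} {x} (c : ℝ) (k : Fin n) :
    pd (fun y => c + f y) k x = pd f k x := by
  simp [pd, fderiv_const_add]

lemma pd_exp {f : EuclideanSpace ℝ (Fin n) → ℝ} {x} (hf : DifferentiableAt ℝ f x) (k : Fin n) :
    pd (fun y => Real.exp (f y)) k x = Real.exp (f x) * pd f k x := by
  simp [pd, fderiv_exp hf]

lemma contDiff_pd {β : EuclideanSpace ℝ (Fin n) → ℝ} (hβ : ContDiff ℝ 2 β) (j : Fin n) :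
    ContDiff ℝ 1 (pd β j) :=
  (hβ.fderiv_right (le_refl 2)).clm_apply contDiff_const

lemma pd_ell (m lam mu γ : ℝ) {β : EuclideanSpace ℝ (Fin n) → ℝ} (hβ : ContDiff ℝ 2 β)
    (j : Fin n) (x : EuclideanSpace ℝ (Fin n)) :
    pd (ellFun m lam mu γ β) j x
      = lam * γ * mu * pd β j x * Real.exp (mu * (6 * m + β x)) := by
  have hβd : DifferentiableAt ℝ β x := (hβ.differentiable two_ne_zero).differentiableAt
  have hin : DifferentiableAt ℝ (fun y => mu * (6 * m + β y)) x :=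
    (hβd.const_add _).const_mul _
  have hexp : DifferentiableAt ℝ (fun y => Real.exp (mu * (6 * m + β y))) x := hin.exp
  have : pd (ellFun m lam mu γ β) j x
      = lam * γ * pd (fun y => Real.exp (mu * (6 * m + β y))
          - mu * Real.exp (mu * (6 * m + 6))) j x := by
    exact pd_const_mul (lam * γ) (hexp.sub_const _) j
  rw [this, pd_sub_const, pd_exp hin, pd_const_mul mu (hβd.const_add _),
    pd_const_add]
  ring

end helpers

/-- The expansion `A = λ²μ²ξ²Ψ + O(λ)μ²ξ` of the auxiliary function in the Carleman
identity, with a constant depending only on `n` and `K`. -/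
theorem stmt7 (n : ℕ) (hn : 0 < n) (K : ℝ) (hK : 1 ≤ K) :
    ∃ C : ℝ, 0 < C ∧
      ∀ (a : Fin n → Fin n → EuclideanSpace ℝ (Fin n) → ℝ)
        (β : EuclideanSpace ℝ (Fin n) → ℝ) (m lam mu γ : ℝ),
        (∀ j k, ContDiff ℝ 1 (a j k)) →
        (∀ j k, a j k = a k j) →
        (∀ j k x, |a j k x| ≤ K) →
        (∀ j k l x, |pd (a j k) l x| ≤ K) →
        ContDiff ℝ 2 β →
        (∀ x, 0 ≤ β x ∧ β x ≤ 1) →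
        (∀ j x, |pd β j x| ≤ K) →
        (∀ j k x, |pd (pd β j) k x| ≤ K) →
        1 ≤ m → 1 ≤ lam → 1 ≤ mu → 0 < γ →
        ∀ x,
          |Afun a (ellFun m lam mu γ β) x -
              lam ^ 2 * mu ^ 2 * (γ * Real.exp (mu * (6 * m + β x))) ^ 2 *
                (∑ j : Fin n, ∑ k : Fin n, a j k x * pd β j x * pd β k x)|
            ≤ C * lam * mu ^ 2 * (γ * Real.exp (mu * (6 * m + β x))) := by
  refine ⟨3 * (n : ℝ) ^ 2 * K ^ 3, by positivity, ?_⟩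
  intro a β m lam mu γ ha _hsym haK hadK hβ _hβ01 hβK hβ2K hm hlam hmu hγ x
  set Ex : ℝ := Real.exp (mu * (6 * m + β x)) with hEx
  have hExpos : 0 < Ex := Real.exp_pos _
  have hβdiff : Differentiable ℝ β := hβ.differentiable two_ne_zero
  have hin : DifferentiableAt ℝ (fun y => mu * (6 * m + β y)) x :=
    ((hβdiff x).const_add _).const_mul _
  have hexp : DifferentiableAt ℝ (fun y => Real.exp (mu * (6 * m + β y))) x := hin.exp
  have hGdiff : ∀ j : Fin n, Differentiable ℝ (pd β j) := fun j =>
    (contDiff_pd hβ j).differentiable one_ne_zero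
  -- the explicit error term
  set T : Fin n → Fin n → ℝ := fun j k =>
    lam * γ * mu * Ex * (pd (a j k) k x * pd β j x + a j k x * pd (pd β j) k x
      + mu * (a j k x * pd β j x * pd β k x)) with hT
  -- derivative of the product a * ℓ_j
  have hmix : ∀ j k : Fin n,
      pd (fun y => a j k y * pd (ellFun m lam mu γ β) j y) k x = T j k := by
    intro j k
    have hfun : (fun y => a j k y * pd (ellFun m lam mu γ β) j y)
        = fun y => a j k y *
            (lam * γ * mu * pd β j y * Real.exp (mu * (6 * m + β y))) := by
      funext y; rw [pd_ell m lam mu γ hβ j y]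
    have hgd : DifferentiableAt ℝ
        (fun y => lam * γ * mu * pd β j y * Real.exp (mu * (6 * m + β y))) x :=
      (((hGdiff j x).const_mul (lam * γ * mu)).mul hexp)
    have hinner : pd (fun y => lam * γ * mu * pd β j y
        * Real.exp (mu * (6 * m + β y))) k x
        = lam * γ * mu * pd β j x * (Ex * (mu * pd β k x))
          + Ex * (lam * γ * mu * pd (pd β j) k x) := by
      rw [pd_mul ((hGdiff j x).const_mul (lam * γ * mu)) hexp k,
        pd_exp hin k, pd_const_mul mu ((hβdiff x).const_add _) k, pd_const_add,
        pd_const_mul (lam * γ * mu) (hGdiff j x) k]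
    rw [hfun, pd_mul ((ha j k).differentiable one_ne_zero x) hgd k, hinner, hT]
    ring
  have key : Afun a (ellFun m lam mu γ β) x
      - lam ^ 2 * mu ^ 2 * (γ * Ex) ^ 2 *
          (∑ j : Fin n, ∑ k : Fin n, a j k x * pd β j x * pd β k x)
      = ∑ j : Fin n, ∑ k : Fin n, -(T j k) := by
    unfold Afun
    rw [Finset.mul_sum, ← Finset.sum_sub_distrib]
    refine Finset.sum_congr rfl fun j _ => ?_
    rw [Finset.mul_sum, ← Finset.sum_sub_distrib]
    refine Finset.sum_congr rfl fun k _ => ?_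
    rw [pd_ell m lam mu γ hβ j x, pd_ell m lam mu γ hβ k x, hmix j k, ← hEx]
    ring
  have hTbound : ∀ j k : Fin n, |T j k| ≤ 3 * K ^ 3 * (lam * mu ^ 2 * (γ * Ex)) := by
    intro j k
    have h0K : 0 ≤ K := le_trans zero_le_one hK
    have hp : |pd (a j k) k x| ≤ K := hadK j k k x
    have hq : |a j k x| ≤ K := haK j k x
    have hr : |pd β j x| ≤ K := hβK j x
    have hs : |pd β k x| ≤ K := hβK k x
    have ht : |pd (pd β j) k x| ≤ K := hβ2K j k x
    have hc : (0:ℝ) ≤ lam * γ * mu * Ex := by positivity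
    have hinner : |pd (a j k) k x * pd β j x + a j k x * pd (pd β j) k x
        + mu * (a j k x * pd β j x * pd β k x)| ≤ K * K + K * K + mu * (K * K * K) := by
      refine (abs_add_le _ _).trans (add_le_add ((abs_add_le _ _).trans (add_le_add ?_ ?_)) ?_)
      · rw [abs_mul]; exact mul_le_mul hp hr (abs_nonneg _) h0K
      · rw [abs_mul]; exact mul_le_mul hq ht (abs_nonneg _) h0K
      · rw [abs_mul, abs_mul, abs_mul, abs_of_pos (lt_of_lt_of_le zero_lt_one hmu)]
        have h1 : |a j k x| * |pd β j x| ≤ K * K :=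
          mul_le_mul hq hr (abs_nonneg _) h0K
        have h2 : |a j k x| * |pd β j x| * |pd β k x| ≤ K * K * K :=
          mul_le_mul h1 hs (abs_nonneg _) (by positivity)
        exact mul_le_mul_of_nonneg_left h2 (le_trans zero_le_one hmu)
    have := mul_le_mul_of_nonneg_left hinner hc
    rw [hT]
    rw [abs_mul, abs_of_nonneg hc]
    refine le_trans this ?_
    have hmuK : (1:ℝ) ≤ mu * K := by nlinarith
    have hrest : K * K + K * K + mu * (K * K * K) ≤ 3 * (mu * K ^ 3) := by
      nlinarith [mul_nonneg (mul_nonneg h0K h0K) (sub_nonneg.2 hmuK)]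
    calc lam * γ * mu * Ex * (K * K + K * K + mu * (K * K * K))
        ≤ lam * γ * mu * Ex * (3 * (mu * K ^ 3)) :=
          mul_le_mul_of_nonneg_left hrest hc
      _ = 3 * K ^ 3 * (lam * mu ^ 2 * (γ * Ex)) := by ring
  rw [← hEx] at *
  rw [key]
  calc |∑ j : Fin n, ∑ k : Fin n, -(T j k)|
      ≤ ∑ j : Fin n, ∑ k : Fin n, |T j k| := by
        refine (Finset.abs_sum_le_sum_abs _ _).trans
          (Finset.sum_le_sum fun j _ => ?_)
        simpa using Finset.abs_sum_le_sum_abs (fun k => -(T j k)) Finset.univ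
    _ ≤ ∑ _j : Fin n, ∑ _k : Fin n, 3 * K ^ 3 * (lam * mu ^ 2 * (γ * Ex)) :=
        Finset.sum_le_sum fun j _ => Finset.sum_le_sum fun k _ => hTbound j k
    _ = (n : ℝ) ^ 2 * (3 * K ^ 3 * (lam * mu ^ 2 * (γ * Ex))) := by
        simp [Finset.sum_const, Finset.card_univ]; ring
    _ = 3 * (n : ℝ) ^ 2 * K ^ 3 * lam * mu ^ 2 * (γ * Ex) := by ring
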